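/- Given a matrix M with m rows and n columns and entries in a set of size h, and a positive integer k, define the bipartite graph T(M) = (A, B, E_T): A is the disjoint union of A_1, …, A_m where each A_i is a copy of [h]^k; B is the disjoint union of B_1, …, B_k where each B_j is a copy of [n]; a vertex ā ∈ A_i is adjacent to a vertex b ∈ B_j iff M_{i,b} = ā[j]. Suppose M satisfies property (M2) for h: for every set C of columns with |C| ≤ h there exists a row r ∈ [m] such that the entries M_{r,c}, c ∈ C, are pairwise distinct. Then T(M) satisfies property (G4): for every X ⊆ B and all choices ā_1 ∈ A_1, …, ā_m ∈ A_m, if every ā_i has at least k+1 neighbors in X, then |X| > h. -/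
import Mathlib


/-- For a matrix `M` with `m` rows, `n` columns and entries in `[h]`, the
bipartite graph `T(M)` has side `A = ⋃_{i∈[m]} A_i` with `A_i = [h]^k` and side
`B = ⋃_{j∈[k]} B_j` with `B_j = [n]` (a vertex of `B` is a pair `(j, b)`), where
`ā ∈ A_i` is adjacent to `(j, b)` iff `M i b = ā j`.  If `M` satisfies (M2) for `h`
(for every set `C` of at most `h` columns some row is injective on `C`), then `T(M)`
satisfies (G4): for every `X ⊆ B` and all `ā_1 ∈ A_1, …, ā_m ∈ A_m`, if every `ā_i`
has at least `k+1` neighbors in `X`, then `|X| > h`. -/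
theorem TM_satisfies_G4 (m n h k : ℕ) (hm : 0 < m) (hn : 0 < n) (hh : 0 < h) (hk : 0 < k)
    (M : Fin m → Fin n → Fin h)
    (hM2 : ∀ C : Finset (Fin n), C.card ≤ h →
      ∃ r : Fin m, ∀ c ∈ C, ∀ c' ∈ C, M r c = M r c' → c = c') :
    ∀ (X : Finset (Fin k × Fin n)) (a : Fin m → (Fin k → Fin h)),
      (∀ i : Fin m, k + 1 ≤ (X.filter (fun p => M i p.2 = a i p.1)).card) →
      h < X.card := by
  intro X a hdeg
  by_contra hle
  push_neg at hle
  set C : Finset (Fin n) := X.image Prod.snd with hC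
  have hCcard : C.card ≤ h := le_trans (Finset.card_image_le) hle
  obtain ⟨r, hr⟩ := hM2 C hCcard
  have hkey : (X.filter (fun p => M r p.2 = a r p.1)).card ≤ k := by
    have : (X.filter (fun p => M r p.2 = a r p.1)).card ≤
        (Finset.univ : Finset (Fin k)).card := by
      apply Finset.card_le_card_of_injOn Prod.fst (fun _ _ => Finset.mem_univ _)
      intro p hp q hq hfst
      simp only [Finset.coe_filter, Set.mem_setOf_eq, Finset.mem_filter] at hp hq
      have hpC : p.2 ∈ C := Finset.mem_image_of_mem Prod.snd hp.1
      have hqC : q.2 ∈ C := Finset.mem_image_of_mem Prod.snd hq.1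
      have hsnd : p.2 = q.2 := hr p.2 hpC q.2 hqC (by rw [hp.2, hq.2, hfst])
      exact Prod.ext hfst hsnd
    simpa using this
  have := hdeg r
  omega
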